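/- Extended impossibility theorem (Theorem 3, finite version): Let q be a PMF on 𝒳 and ε' ≥ 0, and suppose there exists g̃ : 𝒞 → 𝒳 such that μ.map g̃ = q and E_{c~μ}[dist(f c, g̃ c)] ≤ ε'. Then there exists a randomized erasing function Erase : 𝒳 → PMF 𝒳, depending only on f, μ, and q, such that for every g : 𝒞 → 𝒳 with μ.map g = q, every Detect : 𝒳 → Bool, every ε ≥ 0, and every δ ∈ [0,1]: if E_{c~μ}[L(g c, c) − L(f c, c)] ≤ ε and Pr_{c~μ}[Detect(f c) = false] ≥ 1 − δ, then Σ_c μ(c) · Σ_x (Erase(g c))(x) · [Detect(x) = false] ≥ 1 − δ, and Σ_c μ(c) · Σ_x (Erase(g c))(x) · (L(x, c) − L(f c, c)) ≤ ε + ε'. -/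

import Mathlib

open Finset ENNReal

/-- Extended impossibility theorem (Theorem 3, finite version): there exists a
randomized erasing function, depending only on `f`, `μ`, and the watermark
output distribution `q`, that erases any watermark with output distribution `q`
while keeping the detection false rate at least `1 - δ` and increasing the
expected loss by at most `ε'`. -/
theorem extended_impossibility_theorem {𝒳 𝒞 : Type*} [Fintype 𝒳] [Nonempty 𝒳]
    [MetricSpace 𝒳] [Fintype 𝒞] (μ : PMF 𝒞) (f : 𝒞 → 𝒳) (L : 𝒳 → 𝒞 → ℝ)
    (hL : ∀ c, LipschitzWith 1 (fun x => L x c))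
    (q : PMF 𝒳) (ε' : ℝ) (hε' : 0 ≤ ε')
    (hgt : ∃ gt : 𝒞 → 𝒳, μ.map gt = q ∧
      ∑ c, (μ c).toReal * dist (f c) (gt c) ≤ ε') :
    ∃ Erase : 𝒳 → PMF 𝒳,
      ∀ (g : 𝒞 → 𝒳), μ.map g = q →
      ∀ (Detect : 𝒳 → Bool) (ε δ : ℝ), 0 ≤ ε → 0 ≤ δ → δ ≤ 1 →
        (∑ c, (μ c).toReal * (L (g c) c - L (f c) c)) ≤ ε →
        (1 - δ ≤ ∑ c, (μ c).toReal * (if Detect (f c) = false then 1 else 0)) →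
        (1 - δ ≤ ∑ c, (μ c).toReal *
            ∑ x, ((Erase (g c)) x).toReal * (if Detect x = false then 1 else 0)) ∧
        (∑ c, (μ c).toReal *
            ∑ x, ((Erase (g c)) x).toReal * (L x c - L (f c) c)) ≤ ε + ε' := by
  classical
  obtain ⟨gt, hmap, hdist⟩ := hgt
  -- pushforward identity for gt
  have hA : ∀ y, (∑ c, if gt c = y then μ c else 0) = q y := by
    intro y
    rw [← hmap, PMF.map_apply, tsum_fintype]
    exact Finset.sum_congr rfl (fun c _ => by simp [eq_comm])
  -- the unnormalized weights
  set e : 𝒳 → 𝒳 → ℝ≥0∞ :=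
    fun y x => (∑ c, if gt c = y ∧ f c = x then μ c else 0) / q y with he
  have hesum : ∀ y, q y ≠ 0 → ∑ x, e y x = 1 := by
    intro y hy
    rw [he]
    simp only
    simp_rw [div_eq_mul_inv]
    rw [← Finset.sum_mul, Finset.sum_comm]
    have h1 : ∀ c, (∑ x, if gt c = y ∧ f c = x then μ c else 0)
        = if gt c = y then μ c else 0 := by
      intro c
      simp [ite_and]
    simp_rw [h1, hA y]
    exact ENNReal.mul_inv_cancel hy (PMF.apply_ne_top q y)
  set Erase : 𝒳 → PMF 𝒳 := fun y =>
    if hy : q y = 0 then PMF.pure (Classical.arbitrary 𝒳)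
    else PMF.ofFintype (e y) (hesum y hy) with hE
  refine ⟨Erase, ?_⟩
  intro g hg Detect ε δ hε hδ0 hδ1 hloss hdet
  -- Erase sums to 1 in the reals
  have hEsum1 : ∀ y, ∑ x, ((Erase y) x).toReal = 1 := by
    intro y
    have h1 := (Erase y).tsum_coe
    rw [tsum_fintype] at h1
    rw [← ENNReal.toReal_sum (fun x _ => PMF.apply_ne_top _ _), h1, ENNReal.toReal_one]
  have hEnn : ∀ y x, 0 ≤ ((Erase y) x).toReal := fun y x => ENNReal.toReal_nonneg
  -- per-y identity
  have hstep2 : ∀ (h : 𝒳 → 𝒳 → ℝ) (y : 𝒳),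
      (q y).toReal * ∑ x, ((Erase y) x).toReal * h x y
        = ∑ c, (if gt c = y then (μ c).toReal * h (f c) y else 0) := by
    intro h y
    by_cases hy : q y = 0
    · have hz : ∀ c, gt c = y → μ c = 0 := by
        intro c hc
        have h2 := hA y
        rw [hy, Finset.sum_eq_zero_iff] at h2
        have h3 := h2 c (Finset.mem_univ c)
        simpa [hc] using h3
      rw [hy]
      simp only [ENNReal.toReal_zero, zero_mul]
      symm
      refine Finset.sum_eq_zero (fun c _ => ?_)
      by_cases hc : gt c = y
      · simp [hc, hz c hc]
      · simp [hc]
    · have hqne : (q y).toReal ≠ 0 := by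
        simp [ENNReal.toReal_eq_zero_iff, hy, PMF.apply_ne_top q y]
      have hEy : ∀ x, ((Erase y) x).toReal
          = (∑ c, if gt c = y ∧ f c = x then (μ c).toReal else 0) / (q y).toReal := by
        intro x
        rw [hE]
        simp only [dif_neg hy, PMF.ofFintype_apply, he]
        rw [ENNReal.toReal_div]
        congr 1
        rw [ENNReal.toReal_sum (fun c _ => by split <;> simp [PMF.apply_ne_top])]
        exact Finset.sum_congr rfl (fun c _ => by split <;> simp)
      calc (q y).toReal * ∑ x, ((Erase y) x).toReal * h x y
          = ∑ x, (∑ c, if gt c = y ∧ f c = x then (μ c).toReal else 0) * h x y := by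
            rw [Finset.mul_sum]
            refine Finset.sum_congr rfl fun x _ => ?_
            rw [hEy]; field_simp
        _ = ∑ c, ∑ x, (if gt c = y ∧ f c = x then (μ c).toReal else 0) * h x y := by
            simp_rw [Finset.sum_mul]; exact Finset.sum_comm
        _ = ∑ c, (if gt c = y then (μ c).toReal * h (f c) y else 0) := by
            refine Finset.sum_congr rfl fun c _ => ?_
            by_cases hc : gt c = y
            · simp [hc, ite_mul, Finset.sum_ite_eq]
            · simp [hc]
  -- grouping by the value of g
  have hAg : ∀ y, (∑ c, if g c = y then (μ c).toReal else 0) = (q y).toReal := by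
    intro y
    rw [← hg, PMF.map_apply, tsum_fintype,
      ENNReal.toReal_sum (fun c _ => by split <;> simp [PMF.apply_ne_top])]
    refine Finset.sum_congr rfl fun c _ => ?_
    rw [eq_comm (a := y)]
    split <;> simp
  have hgroup : ∀ F : 𝒳 → ℝ,
      ∑ c, (μ c).toReal * F (g c) = ∑ y, (q y).toReal * F y := by
    intro F
    calc ∑ c, (μ c).toReal * F (g c)
        = ∑ c, ∑ y, (if g c = y then (μ c).toReal * F y else 0) := by
          refine Finset.sum_congr rfl fun c _ => ?_
          rw [Finset.sum_ite_eq univ (g c) (fun y => (μ c).toReal * F y)]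
          simp
      _ = ∑ y, (∑ c, if g c = y then (μ c).toReal else 0) * F y := by
          rw [Finset.sum_comm]
          refine Finset.sum_congr rfl fun y _ => ?_
          rw [Finset.sum_mul]
          exact Finset.sum_congr rfl fun c _ => by split <;> simp
      _ = ∑ y, (q y).toReal * F y := by simp_rw [hAg]
  -- the key identity
  have key : ∀ h : 𝒳 → 𝒳 → ℝ,
      ∑ c, (μ c).toReal * ∑ x, ((Erase (g c)) x).toReal * h x (g c)
        = ∑ c, (μ c).toReal * h (f c) (gt c) := by
    intro h
    rw [hgroup (fun y => ∑ x, ((Erase y) x).toReal * h x y)]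
    rw [Finset.sum_congr rfl (fun y _ => hstep2 h y), Finset.sum_comm]
    refine Finset.sum_congr rfl fun c _ => ?_
    rw [Finset.sum_ite_eq univ (gt c) (fun y => (μ c).toReal * h (f c) y)]
    simp
  constructor
  · -- detection bound
    have h1 := key (fun x _ => if Detect x = false then (1:ℝ) else 0)
    linarith
  · -- loss bound
    have hkeyd := key (fun x y => dist x y)
    have hper : ∀ c, ∑ x, ((Erase (g c)) x).toReal * (L x c - L (f c) c)
        ≤ (∑ x, ((Erase (g c)) x).toReal * dist x (g c)) + (L (g c) c - L (f c) c) := by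
      intro c
      have hsplit : ∑ x, ((Erase (g c)) x).toReal * (L x c - L (f c) c)
          = (∑ x, ((Erase (g c)) x).toReal * (L x c - L (g c) c))
            + (∑ x, ((Erase (g c)) x).toReal) * (L (g c) c - L (f c) c) := by
        rw [Finset.sum_mul, ← Finset.sum_add_distrib]
        exact Finset.sum_congr rfl fun x _ => by ring
      rw [hsplit, hEsum1, one_mul]
      refine add_le_add (Finset.sum_le_sum fun x _ => ?_) le_rfl
      refine mul_le_mul_of_nonneg_left ?_ (hEnn _ _)
      have := (hL c).dist_le_mul x (g c)
      rw [Real.dist_eq] at this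
      simp only [NNReal.coe_one, one_mul] at this
      exact (abs_le.mp this).2
    calc ∑ c, (μ c).toReal * ∑ x, ((Erase (g c)) x).toReal * (L x c - L (f c) c)
        ≤ ∑ c, (μ c).toReal * ((∑ x, ((Erase (g c)) x).toReal * dist x (g c))
            + (L (g c) c - L (f c) c)) :=
          Finset.sum_le_sum fun c _ =>
            mul_le_mul_of_nonneg_left (hper c) ENNReal.toReal_nonneg
      _ = (∑ c, (μ c).toReal * ∑ x, ((Erase (g c)) x).toReal * dist x (g c))
            + ∑ c, (μ c).toReal * (L (g c) c - L (f c) c) := by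
          rw [← Finset.sum_add_distrib]
          exact Finset.sum_congr rfl fun c _ => by ring
      _ ≤ ε + ε' := by
          rw [hkeyd]
          have : ∑ c, (μ c).toReal * dist (f c) (gt c) ≤ ε' := hdist
          linarith
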